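/- Fix integers k > ℓ ≥ 0. For n sufficiently large, the quantity D(n) = ∑_{j=0}^{k-ℓ} (-1)^{j+1} C(ℓ+1, j) C(k-ℓ-1, k-ℓ-j) C(n-k-ℓ-1, k-ℓ-j) is positive, and the ratio C(k, k-ℓ)·C(n-k, k-ℓ) / D(n), divided by n, converges to C(k, k-ℓ) / ((k-ℓ)(ℓ+1)) as n → ∞. -/

import Mathlib

open Filter Finset

lemma cdiv (c : ℚ) : Tendsto (fun n : ℕ => c / (n:ℚ)) atTop (nhds 0) :=
  tendsto_const_nhds.div_atTop (tendsto_natCast_atTop_atTop)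

lemma choose_div_pow_tendsto (a i : ℕ) :
    Tendsto (fun n : ℕ => (((n - a).choose i : ℚ)) / (n:ℚ)^i) atTop (nhds (1 / i.factorial)) := by
  have h : ∀ᶠ n : ℕ in atTop, (((n - a).choose i : ℚ)) / (n:ℚ)^i
      = (∏ t ∈ Finset.range i, (1 - (a + t : ℚ)/n)) / i.factorial := by
    filter_upwards [eventually_ge_atTop (a + i), eventually_gt_atTop 0] with n hn hn0
    have hn0' : (n:ℚ) ≠ 0 := Nat.cast_ne_zero.2 hn0.ne'
    have h1 : ((n - a).choose i : ℚ) = ((n-a).descFactorial i : ℚ) / i.factorial := by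
      rw [Nat.descFactorial_eq_factorial_mul_choose]
      push_cast
      field_simp
    rw [h1, Nat.descFactorial_eq_prod_range, div_right_comm]
    congr 1
    push_cast
    rw [show ((n:ℚ))^i = ∏ _t ∈ Finset.range i, (n:ℚ) by simp, ← prod_div_distrib]
    refine Finset.prod_congr rfl fun t ht => ?_
    have htn : a + t ≤ n := by have := Finset.mem_range.1 ht; omega
    have h2 : (n : ℕ) - a - t = n - (a + t) := by omega
    rw [h2, Nat.cast_sub htn]
    push_cast
    field_simp
  rw [tendsto_congr' h]
  have hp : Tendsto (fun n : ℕ => (∏ t ∈ Finset.range i, (1 - (a + t : ℚ)/n))) atTop (nhds 1) := by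
    have := tendsto_finset_prod (Finset.range i)
      (fun t _ => (tendsto_const_nhds.sub (cdiv ((a:ℚ) + t)) : Tendsto (fun n : ℕ => (1 : ℚ) - (a + t : ℚ)/n) atTop (nhds (1 - 0))))
    simpa using this
  simpa using hp.div_const (i.factorial : ℚ)

theorem lovasz_L_singleton_asymptotics (k ℓ : ℕ) (hℓk : ℓ < k) :
    (∀ᶠ n : ℕ in atTop,
        0 < ∑ j ∈ Finset.range (k - ℓ + 1),
            (-1 : ℚ) ^ (j + 1) * ((ℓ + 1).choose j) * ((k - ℓ - 1).choose (k - ℓ - j)) *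
              ((n - k - ℓ - 1).choose (k - ℓ - j))) ∧
      Tendsto
        (fun n : ℕ =>
          ((k.choose (k - ℓ) : ℚ) * ((n - k).choose (k - ℓ)) /
            (∑ j ∈ Finset.range (k - ℓ + 1),
              (-1 : ℚ) ^ (j + 1) * ((ℓ + 1).choose j) * ((k - ℓ - 1).choose (k - ℓ - j)) *
                ((n - k - ℓ - 1).choose (k - ℓ - j)))) / n)
        atTop
        (nhds ((k.choose (k - ℓ) : ℚ) / ((k - ℓ) * (ℓ + 1)))) := by
  set m := k - ℓ with hmdef
  have hm : 1 ≤ m := by omega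
  set a := k + ℓ + 1 with hadef
  have hsub : ∀ n : ℕ, n - k - ℓ - 1 = n - a := by intro n; omega
  set D : ℕ → ℚ := fun n => ∑ j ∈ Finset.range (m + 1),
      (-1 : ℚ) ^ (j + 1) * ((ℓ + 1).choose j) * ((m - 1).choose (m - j)) *
        ((n - k - ℓ - 1).choose (m - j)) with hDdef
  -- limit of D n / n^(m-1)
  have hD : Tendsto (fun n : ℕ => D n / (n:ℚ)^(m-1)) atTop
      (nhds ((ℓ + 1 : ℚ) / (m-1).factorial)) := by
    have hsum : Tendsto (fun n : ℕ => ∑ j ∈ Finset.range (m + 1),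
        ((-1 : ℚ) ^ (j + 1) * ((ℓ + 1).choose j) * ((m - 1).choose (m - j)) *
          ((n - k - ℓ - 1).choose (m - j)) / (n:ℚ)^(m-1))) atTop
        (nhds (∑ j ∈ Finset.range (m + 1),
          (-1 : ℚ) ^ (j + 1) * ((ℓ + 1).choose j) * ((m - 1).choose (m - j)) *
            ((1 / (m - j).factorial) * (0:ℚ)^(j-1)))) := by
      refine tendsto_finset_sum _ fun j hj => ?_
      rcases Nat.eq_zero_or_pos j with rfl | hj1
      · have hz : ((m - 1).choose (m - 0) : ℚ) = 0 := by
          rw [Nat.choose_eq_zero_of_lt (by omega)]; simp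
        simp only [hz]
        simp
      · have hje : m - j + (j - 1) = m - 1 := by
          have := Finset.mem_range.1 hj; omega
        have heq : ∀ᶠ n : ℕ in atTop,
            (-1 : ℚ) ^ (j + 1) * ((ℓ + 1).choose j) * ((m - 1).choose (m - j)) *
              ((n - k - ℓ - 1).choose (m - j)) / (n:ℚ)^(m-1)
            = (-1 : ℚ) ^ (j + 1) * ((ℓ + 1).choose j) * ((m - 1).choose (m - j)) *
              ((((n - a).choose (m - j) : ℚ)) / (n:ℚ)^(m-j) * ((1:ℚ)/n)^(j-1)) := by
          filter_upwards [eventually_gt_atTop 0] with n hn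
          have hn0 : (n:ℚ) ≠ 0 := Nat.cast_ne_zero.2 hn.ne'
          rw [hsub n, ← hje, pow_add, div_pow, one_pow]
          ring
        rw [tendsto_congr' heq]
        exact tendsto_const_nhds.mul
          ((choose_div_pow_tendsto a (m - j)).mul ((cdiv 1).pow (j-1)))
    have hlim : (∑ j ∈ Finset.range (m + 1),
          (-1 : ℚ) ^ (j + 1) * ((ℓ + 1).choose j) * ((m - 1).choose (m - j)) *
            ((1 / (m - j).factorial) * (0:ℚ)^(j-1)))
        = (ℓ + 1 : ℚ) / (m-1).factorial := by
      rw [Finset.sum_eq_single_of_mem 1 (Finset.mem_range.2 (by omega))]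
      · simp [Nat.choose_self, Nat.choose_one_right]
        ring
      · intro j hj hj1
        rcases Nat.eq_zero_or_pos j with rfl | hjpos
        · rw [Nat.choose_eq_zero_of_lt (show m - 1 < m - 0 by omega)]; simp
        · rw [zero_pow (show j - 1 ≠ 0 by omega)]; ring
    rw [← hlim]
    refine hsum.congr fun n => ?_
    rw [← Finset.sum_div]
  have hDpos : ∀ᶠ n : ℕ in atTop, 0 < D n := by
    have hd : (0:ℚ) < (ℓ + 1 : ℚ) / (m-1).factorial := by positivity
    filter_upwards [hD.eventually (eventually_gt_nhds hd), eventually_gt_atTop 0] with n h hn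
    have hp : (0:ℚ) < (n:ℚ)^(m-1) := by positivity
    have := mul_pos h hp
    rwa [div_mul_cancel₀ _ hp.ne'] at this
  refine ⟨hDpos, ?_⟩
  -- numerator limit
  have hA : Tendsto (fun n : ℕ => (k.choose m : ℚ) * ((n - k).choose m) / (n:ℚ)^m) atTop
      (nhds ((k.choose m : ℚ) * (1 / m.factorial))) := by
    simpa [mul_div_assoc] using tendsto_const_nhds.mul (choose_div_pow_tendsto k m)
  have hDne : ((ℓ + 1 : ℚ) / (m-1).factorial) ≠ 0 := by positivity
  have hmain := hA.div hD hDne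
  have heq2 : ∀ᶠ n : ℕ in atTop,
      ((k.choose m : ℚ) * ((n - k).choose m) / (n:ℚ)^m) / (D n / (n:ℚ)^(m-1))
      = ((k.choose m : ℚ) * ((n - k).choose m) / D n) / n := by
    filter_upwards [hDpos, eventually_gt_atTop 0] with n hDn hn
    have hn0 : (n:ℚ) ≠ 0 := Nat.cast_ne_zero.2 hn.ne'
    have hpm : (n:ℚ)^m = (n:ℚ)^(m-1) * n := by
      rw [← pow_succ]; congr 1; omega
    rw [hpm]
    field_simp
  have hval : ((k.choose m : ℚ) * (1 / m.factorial)) / ((ℓ + 1 : ℚ) / (m-1).factorial)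
      = (k.choose m : ℚ) / (((k:ℚ) - ℓ) * ((ℓ:ℚ) + 1)) := by
    have hfac : (m.factorial : ℚ) = m * (m-1).factorial := by
      conv_lhs => rw [show m = (m-1) + 1 by omega]
      rw [Nat.factorial_succ]
      push_cast
      rw [Nat.cast_sub hm]
      push_cast
      ring
    have hmcast : ((m:ℚ)) = (k:ℚ) - ℓ := by
      rw [hmdef]; push_cast [Nat.cast_sub hℓk.le]; ring
    have h1 : ((m-1).factorial : ℚ) ≠ 0 := Nat.cast_ne_zero.2 (Nat.factorial_ne_zero _)
    have h2 : ((k:ℚ) - ℓ) ≠ 0 := by rw [← hmcast]; exact_mod_cast (by omega : m ≠ 0)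
    have h3 : ((ℓ:ℚ) + 1) ≠ 0 := by positivity
    rw [hfac, hmcast]
    field_simp
  rw [← hval]
  exact hmain.congr' heq2
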